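/- A partial cube G (an isometric subgraph of a hypercube Q_m) has VC-dimension at most d if and only if G does not have the (d+1)-dimensional hypercube Q_{d+1} as a partial cube minor (i.e., Q_{d+1} cannot be obtained from G by a sequence of contractions of Θ-classes and restrictions to halfspaces). -/

import Mathlib

open Finset

/-- The hypercube graph on subsets of `Fin m`. -/
def cubeGraph (m : ℕ) : SimpleGraph (Finset (Fin m)) where
  Adj A B := (symmDiff A B).card = 1
  symm := ⟨fun A B (h : (symmDiff A B).card = 1) => by show (symmDiff B A).card = 1; rwa [symmDiff_comm]⟩
  loopless := ⟨fun A (h : (symmDiff A A).card = 1) => by simp only [symmDiff_self, bot_eq_empty, card_empty] at h; exact absurd h (by norm_num)⟩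

/-- `V` is (the vertex set of) a partial cube isometrically embedded in `Q_m`:
the distance in the induced subgraph equals the Hamming distance. -/
def IsPC {m : ℕ} (V : Set (Finset (Fin m))) : Prop :=
  ∀ u v : V, ((cubeGraph m).induce V).dist u v = (symmDiff u.1 v.1).card

def Shatters {m : ℕ} (V : Set (Finset (Fin m))) (Y : Finset (Fin m)) : Prop :=
  ∀ Z ⊆ Y, ∃ B ∈ V, B ∩ Y = Z

def VCdimLE {m : ℕ} (V : Set (Finset (Fin m))) (d : ℕ) : Prop :=
  ∀ Y : Finset (Fin m), Shatters V Y → Y.card ≤ d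

inductive PCStep {m : ℕ} : Set (Finset (Fin m)) → Set (Finset (Fin m)) → Prop
  | contract (i : Fin m) (V : Set (Finset (Fin m))) :
      PCStep V ((fun B => B.erase i) '' V)
  | restrictPos (i : Fin m) (V : Set (Finset (Fin m))) :
      PCStep V {B ∈ V | i ∈ B}
  | restrictNeg (i : Fin m) (V : Set (Finset (Fin m))) :
      PCStep V {B ∈ V | i ∉ B}

/-- Partial-cube minor relation: a sequence of contractions and restrictions. -/
def PCMinor {m : ℕ} : Set (Finset (Fin m)) → Set (Finset (Fin m)) → Prop :=
  Relation.ReflTransGen PCStep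

/-- `W` is (the vertex set of) a `k`-dimensional subcube of `Q_m`. -/
def IsCubeFam {m : ℕ} (k : ℕ) (W : Set (Finset (Fin m))) : Prop :=
  ∃ (Y X : Finset (Fin m)), Disjoint Y X ∧ X.card = k ∧
    W = {B | ∃ Z ⊆ X, B = Y ∪ Z}

/-- `G` has the cube `Q_k` as a pc-minor. -/
def HasQMinor {m : ℕ} (V : Set (Finset (Fin m))) (k : ℕ) : Prop :=
  ∃ W, PCMinor V W ∧ IsCubeFam k W

def hdist {m : ℕ} (A B : Finset (Fin m)) : ℕ := (symmDiff A B).card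

def IsConvexIn {m : ℕ} (V S : Set (Finset (Fin m))) : Prop :=
  S ⊆ V ∧ ∀ u ∈ S, ∀ v ∈ S, ∀ x ∈ V, hdist u x + hdist x v = hdist u v → x ∈ S

def convexHullIn {m : ℕ} (V S : Set (Finset (Fin m))) : Set (Finset (Fin m)) :=
  ⋂₀ {T | S ⊆ T ∧ IsConvexIn V T}

def IsGatedIn {m : ℕ} (V S : Set (Finset (Fin m))) : Prop :=
  S ⊆ V ∧ ∀ x ∈ V, ∃ g ∈ S, ∀ y ∈ S, hdist x g + hdist g y = hdist x y

/-- The standardly embedded full subdivision `SK_n` in `Q_n`: singletons and pairs. -/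
def SKset (n : ℕ) : Set (Finset (Fin n)) := {B | B.card = 1 ∨ B.card = 2}

/-- A standardly embedded copy of `SK_n` in `Q_m` along the injection `ι`. -/
def skCopy {m : ℕ} (n : ℕ) (ι : Fin n → Fin m) : Set (Finset (Fin m)) :=
  (fun B => B.image ι) '' SKset n


lemma vc_step {m d : ℕ} {V W : Set (Finset (Fin m))} (h : PCStep V W)
    (hV : VCdimLE V d) : VCdimLE W d := by
  cases h with
  | contract i V =>
    intro Y hY
    have hi : i ∉ Y := by
      intro hiY
      obtain ⟨B, hB, hBY⟩ := hY Y (subset_refl _)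
      obtain ⟨B0, _, rfl⟩ := hB
      have : i ∈ B0.erase i ∩ Y := by rw [hBY]; exact hiY
      exact (Finset.notMem_erase i B0) (Finset.mem_inter.1 this).1
    apply hV Y
    intro Z hZ
    obtain ⟨B, hB, hBY⟩ := hY Z hZ
    obtain ⟨B0, hB0, rfl⟩ := hB
    refine ⟨B0, hB0, ?_⟩
    rw [← hBY]
    ext x
    simp only [Finset.mem_inter, Finset.mem_erase]
    constructor
    · rintro ⟨hb, hy⟩; exact ⟨⟨fun e => hi (e ▸ hy), hb⟩, hy⟩
    · rintro ⟨⟨_, hb⟩, hy⟩; exact ⟨hb, hy⟩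
  | restrictPos i V =>
    intro Y hY
    exact hV Y fun Z hZ => by
      obtain ⟨B, hB, hBY⟩ := hY Z hZ; exact ⟨B, hB.1, hBY⟩
  | restrictNeg i V =>
    intro Y hY
    exact hV Y fun Z hZ => by
      obtain ⟨B, hB, hBY⟩ := hY Z hZ; exact ⟨B, hB.1, hBY⟩

lemma vc_minor {m d : ℕ} {V W : Set (Finset (Fin m))} (h : PCMinor V W)
    (hV : VCdimLE V d) : VCdimLE W d := by
  induction h with
  | refl => exact hV
  | tail _ step ih => exact vc_step step ih

lemma foldl_erase {m : ℕ} (l : List (Fin m)) (B : Finset (Fin m)) :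
    l.foldl (fun s i => s.erase i) B = B \ l.toFinset := by
  induction l generalizing B with
  | nil => simp
  | cons a t ih =>
    rw [List.foldl_cons, ih, List.toFinset_cons, Finset.erase_eq,
      sdiff_sdiff, Finset.insert_eq, Finset.sup_eq_union]

lemma pcminor_foldl {m : ℕ} (l : List (Fin m)) (V : Set (Finset (Fin m))) :
    PCMinor V ((fun B => l.foldl (fun s i => s.erase i) B) '' V) := by
  induction l generalizing V with
  | nil => simpa [PCMinor] using Relation.ReflTransGen.refl
  | cons a t ih =>
    refine Relation.ReflTransGen.head (PCStep.contract a V) ?_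
    have := ih ((fun B => B.erase a) '' V)
    rwa [Set.image_image] at this


/-- A partial cube has VC-dimension at most `d` iff it does not have `Q_{d+1}`
as a pc-minor. -/
theorem stmt0 (m d : ℕ) (V : Set (Finset (Fin m))) (hV : IsPC V) :
    VCdimLE V d ↔ ¬ HasQMinor V (d + 1) := by
  constructor
  · rintro hvc ⟨W, hmin, Y, X, hdisj, hcard, rfl⟩
    have hsh : _root_.Shatters {B | ∃ Z ⊆ X, B = Y ∪ Z} X := by
      intro Z hZ
      refine ⟨Y ∪ Z, ⟨Z, hZ, rfl⟩, ?_⟩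
      rw [Finset.union_inter_distrib_right, Finset.inter_eq_left.2 hZ,
        Finset.disjoint_iff_inter_eq_empty.1 hdisj, Finset.empty_union]
    have := vc_minor hmin hvc X hsh
    omega
  · intro h
    by_contra hvc
    apply h
    simp only [VCdimLE, not_forall] at hvc
    obtain ⟨Y, hY, hYd⟩ := hvc
    obtain ⟨X, hXY, hXcard⟩ := Finset.exists_subset_card_eq (show d + 1 ≤ Y.card by omega)
    have hshX : Shatters V X := by
      intro Z hZ
      obtain ⟨B, hB, hBY⟩ := hY Z (hZ.trans hXY)
      refine ⟨B, hB, ?_⟩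
      rw [← Finset.inter_eq_right.2 hXY, ← Finset.inter_assoc, hBY,
        Finset.inter_eq_left.2 hZ]
    refine ⟨(fun B => B ∩ X) '' V, ?_, ∅, X, Finset.disjoint_empty_left X, hXcard, ?_⟩
    · have := pcminor_foldl Xᶜ.toList V
      have heq : (fun B => Xᶜ.toList.foldl (fun s i => s.erase i) B) =
          fun B : Finset (Fin m) => B ∩ X := by
        funext B
        rw [foldl_erase, Finset.toList_toFinset, Finset.sdiff_eq_inter_compl, compl_compl]
      rwa [heq] at this
    · ext B
      simp only [Set.mem_image, Set.mem_setOf_eq]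
      constructor
      · rintro ⟨B0, _, rfl⟩
        exact ⟨B0 ∩ X, Finset.inter_subset_right, (Finset.empty_union _).symm⟩
      · rintro ⟨Z, hZ, rfl⟩
        obtain ⟨B0, hB0, hB0X⟩ := hshX Z hZ
        exact ⟨B0, hB0, by rw [hB0X, Finset.empty_union]⟩
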